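/- The triple (s₁(Z), s₂(Z), s₁(Z)) of elementary symmetric polynomials in three variables Z = (Z₁, Z₂, Z₃) satisfies both Markov-type equations: aa* + bb* + cc* − a b* c = 3 − (Z₁³+Z₂³+Z₃³)/(Z₁Z₂Z₃) and aa* + bb* + cc* − a* b c* = 3 − (Z₂³Z₃³+Z₁³Z₃³+Z₁³Z₂³)/(Z₁²Z₂²Z₃²), where f* denotes the substitution Zᵢ ↦ Zᵢ^{-1}. -/

import Mathlib

/-- The ring of integer Laurent polynomials in three variables
`ℤ[Z₁^{±1}, Z₂^{±1}, Z₃^{±1}]`, realized as the group algebra of `Fin 3 → ℤ` over `ℤ`. -/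
abbrev Laurent3 : Type := AddMonoidAlgebra ℤ (Fin 3 → ℤ)

/-- The involution `f ↦ f*` inverting each variable. -/
noncomputable def invol3 (f : Laurent3) : Laurent3 :=
  AddMonoidAlgebra.mapDomain (fun v : Fin 3 → ℤ => -v) f

/-- The variable `Z_i`. -/
noncomputable def Zv (i : Fin 3) : Laurent3 :=
  AddMonoidAlgebra.single (Pi.single i (1 : ℤ)) 1

/-- Auxiliary: the monomial `Z₁^x Z₂^y Z₃^z`. -/
noncomputable def E (x y z : ℤ) : Laurent3 :=
  AddMonoidAlgebra.single (![x, y, z] : Fin 3 → ℤ) 1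

lemma Zv0 : Zv 0 = E 1 0 0 := by
  unfold Zv E; congr 1; funext i; fin_cases i <;> simp

lemma Zv1 : Zv 1 = E 0 1 0 := by
  unfold Zv E; congr 1; funext i; fin_cases i <;> simp

lemma Zv2 : Zv 2 = E 0 0 1 := by
  unfold Zv E; congr 1; funext i; fin_cases i <;> simp

lemma invol_add (f g : Laurent3) : invol3 (f + g) = invol3 f + invol3 g :=
  AddMonoidAlgebra.mapDomain_add _ _ _

lemma invol_E (x y z : ℤ) : invol3 (E x y z) = E (-x) (-y) (-z) := by
  unfold invol3 E
  rw [AddMonoidAlgebra.mapDomain_single]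
  congr 1; funext i; fin_cases i <;> simp

lemma E_mul (x y z x' y' z' : ℤ) : E x y z * E x' y' z' = E (x+x') (y+y') (z+z') := by
  unfold E
  rw [AddMonoidAlgebra.single_mul_single]
  congr 1
  funext i; fin_cases i <;> simp

lemma three_eq : (3 : Laurent3) = E 0 0 0 + E 0 0 0 + E 0 0 0 := by
  have h1 : (1 : Laurent3) = E 0 0 0 := by
    unfold E
    rw [AddMonoidAlgebra.one_def]
    congr 1; funext i; fin_cases i <;> simp
  rw [show (3 : Laurent3) = 1 + 1 + 1 by norm_num, h1]

lemma neg1_eq : (AddMonoidAlgebra.single (fun _ : Fin 3 => (-1 : ℤ)) 1 : Laurent3) = E (-1) (-1) (-1) := by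
  unfold E; congr 1; funext i; fin_cases i <;> simp

lemma neg2_eq : (AddMonoidAlgebra.single (fun _ : Fin 3 => (-2 : ℤ)) 1 : Laurent3) = E (-2) (-2) (-2) := by
  unfold E; congr 1; funext i; fin_cases i <;> simp

/-- the triple `(a,b,c) = (s₁(Z), s₂(Z), s₁(Z))` satisfies both
Markov-type equations
`aa* + bb* + cc* − a b* c = 3 − (Z₁³+Z₂³+Z₃³)/(Z₁Z₂Z₃)` and
`aa* + bb* + cc* − a* b c* = 3 − (Z₂³Z₃³+Z₁³Z₃³+Z₁³Z₂³)/(Z₁²Z₂²Z₃²)`. -/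
theorem stmt10 :
    (let a : Laurent3 := Zv 0 + Zv 1 + Zv 2
     let b : Laurent3 := Zv 0 * Zv 1 + Zv 0 * Zv 2 + Zv 1 * Zv 2
     let c : Laurent3 := Zv 0 + Zv 1 + Zv 2
     a * invol3 a + b * invol3 b + c * invol3 c - a * invol3 b * c
        = 3 - (Zv 0 ^ 3 + Zv 1 ^ 3 + Zv 2 ^ 3) *
            AddMonoidAlgebra.single (fun _ : Fin 3 => (-1 : ℤ)) 1 ∧
     a * invol3 a + b * invol3 b + c * invol3 c - invol3 a * b * invol3 c
        = 3 - (Zv 1 ^ 3 * Zv 2 ^ 3 + Zv 0 ^ 3 * Zv 2 ^ 3 + Zv 0 ^ 3 * Zv 1 ^ 3) *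
            AddMonoidAlgebra.single (fun _ : Fin 3 => (-2 : ℤ)) 1) := by
  constructor <;>
  · simp only [Zv0, Zv1, Zv2, invol_add, E_mul, invol_E, three_eq, neg1_eq, neg2_eq,
      pow_succ, pow_zero, one_mul, mul_add, add_mul]
    norm_num [E_mul]
    abel
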